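/- Let G be a linearly ordered group and S = {x₁, x₂, x₃} ⊆ G with x₁ < x₂ < x₃. If |S·S| ≤ 5, then x₁x₂ = x₂x₁ and x₁x₃ = x₂², and hence S = {y, yx, yx²} for the commuting elements y = x₁ and x = x₂x₁⁻¹. -/

import Mathlib

open Pointwise

theorem stmt5 {G : Type*} [Group G] [LinearOrder G]
    [CovariantClass G G (· * ·) (· ≤ ·)]
    [CovariantClass G G (Function.swap (· * ·)) (· ≤ ·)]
    (x₁ x₂ x₃ : G) (h12 : x₁ < x₂) (h23 : x₂ < x₃)
    (S : Finset G) (hS : S = {x₁, x₂, x₃})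
    (h : (S * S).card ≤ 5) :
    x₁ * x₂ = x₂ * x₁ ∧ x₁ * x₃ = x₂ * x₂ ∧
      x₁ * (x₂ * x₁⁻¹) = (x₂ * x₁⁻¹) * x₁ ∧
      S = {x₁, x₁ * (x₂ * x₁⁻¹), x₁ * (x₂ * x₁⁻¹) ^ 2} := by
  have h1S : x₁ ∈ S := by simp [hS]
  have h2S : x₂ ∈ S := by simp [hS]
  have h3S : x₃ ∈ S := by simp [hS]
  set T : Finset G := {x₁*x₁, x₁*x₂, x₂*x₂, x₂*x₃, x₃*x₃} with hT
  have l1 : x₁*x₁ < x₁*x₂ := mul_lt_mul_right h12 x₁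
  have l2 : x₁*x₂ < x₂*x₂ := mul_lt_mul_left h12 x₂
  have l3 : x₂*x₂ < x₂*x₃ := mul_lt_mul_right h23 x₂
  have l4 : x₂*x₃ < x₃*x₃ := mul_lt_mul_left h23 x₃
  have hTsub : T ⊆ S * S := by
    intro y hy
    simp only [hT, Finset.mem_insert, Finset.mem_singleton] at hy
    rcases hy with rfl | rfl | rfl | rfl | rfl
    · exact Finset.mul_mem_mul h1S h1S
    · exact Finset.mul_mem_mul h1S h2S
    · exact Finset.mul_mem_mul h2S h2S
    · exact Finset.mul_mem_mul h2S h3S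
    · exact Finset.mul_mem_mul h3S h3S
  have hTcard : T.card = 5 := by
    rw [hT]
    rw [Finset.card_insert_of_notMem, Finset.card_insert_of_notMem,
      Finset.card_insert_of_notMem, Finset.card_insert_of_notMem,
      Finset.card_singleton]
    · simp only [Finset.mem_singleton]; exact l4.ne
    · simp only [Finset.mem_insert, Finset.mem_singleton]
      push_neg
      exact ⟨l3.ne, (l3.trans l4).ne⟩
    · simp only [Finset.mem_insert, Finset.mem_singleton]
      push_neg
      exact ⟨l2.ne, (l2.trans l3).ne, (l2.trans (l3.trans l4)).ne⟩
    · simp only [Finset.mem_insert, Finset.mem_singleton]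
      push_neg
      exact ⟨l1.ne, (l1.trans l2).ne, (l1.trans (l2.trans l3)).ne,
        (l1.trans (l2.trans (l3.trans l4))).ne⟩
  have hST : T = S * S := Finset.eq_of_subset_of_card_le hTsub (by omega)
  -- x₂ * x₁ must be x₁ * x₂
  have hcomm : x₁ * x₂ = x₂ * x₁ := by
    have hx : x₂ * x₁ ∈ T := by rw [hST]; exact Finset.mul_mem_mul h2S h1S
    have lo : x₁ * x₁ < x₂ * x₁ := mul_lt_mul_left h12 x₁
    have hi : x₂ * x₁ < x₂ * x₂ := mul_lt_mul_right h12 x₂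
    simp only [hT, Finset.mem_insert, Finset.mem_singleton] at hx
    rcases hx with hx | hx | hx | hx | hx
    · exact absurd hx.symm lo.ne
    · exact hx.symm
    · exact absurd hx hi.ne
    · exact absurd hx (hi.trans l3).ne
    · exact absurd hx (hi.trans (l3.trans l4)).ne
  have h13 : x₁ * x₃ = x₂ * x₂ := by
    have hx : x₁ * x₃ ∈ T := by rw [hST]; exact Finset.mul_mem_mul h1S h3S
    have lo : x₁ * x₂ < x₁ * x₃ := mul_lt_mul_right h23 x₁
    have hi : x₁ * x₃ < x₂ * x₃ := mul_lt_mul_left h12 x₃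
    simp only [hT, Finset.mem_insert, Finset.mem_singleton] at hx
    rcases hx with hx | hx | hx | hx | hx
    · exact absurd hx.symm (l1.trans lo).ne
    · exact absurd hx.symm lo.ne
    · exact hx
    · exact absurd hx hi.ne
    · exact absurd hx (hi.trans l4).ne
  have hx2 : x₁ * (x₂ * x₁⁻¹) = x₂ := by
    rw [← mul_assoc, hcomm, mul_inv_cancel_right]
  have hc3 : x₁ * x₃ = x₃ * x₁ := by
    apply mul_left_cancel (a := x₁)
    calc x₁ * (x₁ * x₃) = x₁ * (x₂ * x₂) := by rw [h13]
      _ = (x₁ * x₂) * x₂ := by rw [mul_assoc]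
      _ = (x₂ * x₁) * x₂ := by rw [hcomm]
      _ = x₂ * (x₁ * x₂) := by rw [mul_assoc]
      _ = x₂ * (x₂ * x₁) := by rw [hcomm]
      _ = (x₂ * x₂) * x₁ := by rw [mul_assoc]
      _ = (x₁ * x₃) * x₁ := by rw [h13]
      _ = x₁ * (x₃ * x₁) := by rw [mul_assoc]
  have hx3 : x₁ * (x₂ * x₁⁻¹) ^ 2 = x₃ := by
    calc x₁ * (x₂ * x₁⁻¹) ^ 2 = (x₁ * (x₂ * x₁⁻¹)) * (x₂ * x₁⁻¹) := by
          rw [sq, ← mul_assoc]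
      _ = x₂ * (x₂ * x₁⁻¹) := by rw [hx2]
      _ = (x₂ * x₂) * x₁⁻¹ := by rw [mul_assoc]
      _ = (x₁ * x₃) * x₁⁻¹ := by rw [h13]
      _ = (x₃ * x₁) * x₁⁻¹ := by rw [hc3]
      _ = x₃ := by rw [mul_inv_cancel_right]
  refine ⟨hcomm, h13, ?_, ?_⟩
  · rw [hx2, mul_assoc, inv_mul_cancel, mul_one]
  · rw [hx2, hx3, hS]
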